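/- Let J ≥ 1 and let v_1, v_2, v_3 be three black beads of a necklace O such that the clockwise arc from v_1 to v_3 contains v_2 and has at most J black beads (excluding v_1 and v_3), and suppose the arcs v_1–v_2 and v_2–v_3 contain m_1 and m_2 white beads, respectively. If O' is obtained from O by removing v_2, then μ_J(O') ≤ μ_J(O) − m_1 m_2. -/

import Mathlib

namespace Necklace

/-- A necklace is modelled as a list of bead colours, listed in clockwise order:
`true` is a white bead, `false` a black bead.  Beads are identified with their
indices in the list. -/
def dist (L : List Bool) (i j : ℕ) : ℕ := (j + L.length - i) % L.length

/-- The number of black beads strictly inside the clockwise arc from bead `i` to bead `j`. -/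
def arcBlack (L : List Bool) (i j : ℕ) : ℕ :=
  (List.range (dist L i j)).countP
    (fun k => decide (k ≠ 0 ∧ L.getD ((i + k) % L.length) true = false))

/-- The number of white beads strictly inside the clockwise arc from bead `i` to bead `j`. -/
def arcWhite (L : List Bool) (i j : ℕ) : ℕ :=
  (List.range (dist L i j)).countP
    (fun k => decide (k ≠ 0 ∧ L.getD ((i + k) % L.length) true = true))

/-- The number of white beads of the necklace. -/
def whiteCount (L : List Bool) : ℕ := L.countP (fun x => x)

/-- The set `P_j` of ordered pairs `(o₁, o₂)` of distinct white beads such that the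
clockwise arc from `o₁` to `o₂` contains at least `j` black beads. -/
def Pset (L : List Bool) (j : ℕ) : Finset (ℕ × ℕ) :=
  (Finset.range L.length ×ˢ Finset.range L.length).filter
    (fun p => p.1 ≠ p.2 ∧ L.getD p.1 true = true ∧ L.getD p.2 true = true ∧
      j ≤ arcBlack L p.1 p.2)

/-- The `J`-mixture `μ_J(O) = Σ_{j=1}^J card(P_j)`. -/
def mu (J : ℕ) (L : List Bool) : ℕ := ∑ j ∈ Finset.Icc 1 J, (Pset L j).card

end Necklace

namespace NecklaceAux
open Necklace Finset


def seg (c : Bool) (L : List Bool) (a b : ℕ) : ℕ :=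
  ((Finset.Ico a b).filter (fun m => L.getD m true = c)).card

def arcC (c : Bool) (L : List Bool) (i j : ℕ) : ℕ :=
  (List.range (dist L i j)).countP
    (fun k => decide (k ≠ 0 ∧ L.getD ((i + k) % L.length) true = c))

lemma arcBlack_eq (L : List Bool) (i j : ℕ) : arcBlack L i j = arcC false L i j := rfl
lemma arcWhite_eq (L : List Bool) (i j : ℕ) : arcWhite L i j = arcC true L i j := rfl

lemma countP_range (p : ℕ → Prop) [DecidablePred p] (m : ℕ) :
    (List.range m).countP (fun k => decide (p k)) = ((Finset.range m).filter p).card := by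
  simp [Finset.range, Finset.card, Finset.filter, Multiset.range, Multiset.filter,
    List.countP_eq_length_filter]
  rfl

lemma mod_small {x n : ℕ} (h : x < n) : x % n = x := Nat.mod_eq_of_lt h

lemma mod_two {x n : ℕ} (h1 : n ≤ x) (h2 : x < 2 * n) : x % n = x - n := by
  rw [Nat.mod_eq_sub_mod h1, Nat.mod_eq_of_lt (by omega)]

lemma dist_eval_le (L : List Bool) {i j : ℕ} (hij : i ≤ j) (hj : j < L.length) :
    dist L i j = j - i := by
  unfold Necklace.dist
  rw [show j + L.length - i = (j - i) + L.length by omega, Nat.add_mod_right,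
    Nat.mod_eq_of_lt (by omega)]

lemma dist_eval_gt (L : List Bool) {i j : ℕ} (hji : j < i) (hi : i < L.length) :
    dist L i j = j + L.length - i := by
  unfold Necklace.dist; rw [Nat.mod_eq_of_lt (by omega)]

lemma A1 (c : Bool) (L : List Bool) {i j : ℕ} (hij : i < j) (hj : j < L.length) :
    arcC c L i j = seg c L (i + 1) j := by
  unfold arcC seg
  rw [dist_eval_le L (le_of_lt hij) hj, countP_range]
  apply Finset.card_bij' (fun k _ => i + k) (fun m _ => m - i)
  · intro k hk
    simp only [Finset.mem_filter, Finset.mem_range] at hk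
    simp only [Finset.mem_filter, Finset.mem_Ico]
    have h2 := hk.2.2
    rw [Nat.mod_eq_of_lt (by omega)] at h2
    refine ⟨⟨by omega, by omega⟩, h2⟩
  · intro m hm
    simp only [Finset.mem_filter, Finset.mem_Ico] at hm
    simp only [Finset.mem_filter, Finset.mem_range]
    refine ⟨by omega, by omega, ?_⟩
    rw [show i + (m - i) = m by omega, Nat.mod_eq_of_lt (by omega)]
    exact hm.2
  · intro k hk; simp only [Finset.mem_filter, Finset.mem_range] at hk; omega
  · intro m hm; simp only [Finset.mem_filter, Finset.mem_Ico] at hm; omega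

lemma A2 (c : Bool) (L : List Bool) {i j : ℕ} (hji : j < i) (hi : i < L.length) :
    arcC c L i j = seg c L (i + 1) L.length + seg c L 0 j := by
  unfold arcC seg
  set n := L.length with hn
  rw [dist_eval_gt L hji hi, countP_range,
    ← Finset.card_union_of_disjoint (by
      apply Finset.disjoint_filter_filter
      rw [Finset.disjoint_left]
      intro a ha hb
      simp only [Finset.mem_Ico] at ha hb
      omega),
    ← Finset.filter_union]
  apply Finset.card_bij' (fun k _ => (i + k) % n) (fun m _ => if i < m then m - i else m + n - i)
  · intro k hk
    simp only [Finset.mem_filter, Finset.mem_range] at hk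
    obtain ⟨hkd, hk0, hc⟩ := hk
    simp only [Finset.mem_filter, Finset.mem_union, Finset.mem_Ico]
    refine ⟨?_, hc⟩
    by_cases h : i + k < n
    · rw [Nat.mod_eq_of_lt h]; left; omega
    · rw [mod_two (by omega) (by omega)]; right; omega
  · intro m hm
    simp only [Finset.mem_filter, Finset.mem_union, Finset.mem_Ico] at hm
    simp only [Finset.mem_filter, Finset.mem_range]
    obtain ⟨hm1, hc⟩ := hm
    by_cases h : i < m
    · have : m < n := by rcases hm1 with h1 | h1 <;> omega
      rw [if_pos h]
      refine ⟨by rcases hm1 with h1 | h1 <;> omega, by omega, ?_⟩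
      rwa [show i + (m - i) = m by omega, Nat.mod_eq_of_lt this]
    · rw [if_neg h]
      have hmj : m < j := by rcases hm1 with h1 | h1 <;> omega
      refine ⟨by omega, by omega, ?_⟩
      rwa [show i + (m + n - i) = m + n by omega, Nat.add_mod_right, Nat.mod_eq_of_lt (by omega)]
  · intro k hk
    simp only [Finset.mem_filter, Finset.mem_range] at hk
    by_cases h : i + k < n
    · rw [Nat.mod_eq_of_lt h, if_pos (by omega)]; omega
    · rw [mod_two (by omega) (by omega), if_neg (by omega)]; omega
  · intro m hm
    simp only [Finset.mem_filter, Finset.mem_union, Finset.mem_Ico] at hm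
    obtain ⟨hm1, hc⟩ := hm
    by_cases h : i < m
    · have : m < n := by rcases hm1 with h1 | h1 <;> omega
      rw [if_pos h, show i + (m - i) = m by omega, Nat.mod_eq_of_lt this]
    · have hmj : m < j := by rcases hm1 with h1 | h1 <;> omega
      rw [if_neg h, show i + (m + n - i) = m + n by omega, Nat.add_mod_right,
        Nat.mod_eq_of_lt (by omega)]


lemma getD_dropLast (L : List Bool) {m : ℕ} (hm : m < L.length - 1) :
    L.dropLast.getD m true = L.getD m true := by
  rw [List.getD_eq_getElem _ _ (by rw [List.length_dropLast]; omega),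
    List.getD_eq_getElem _ _ (by omega), List.getElem_dropLast]

lemma seg_dropLast (c : Bool) (L : List Bool) {a b : ℕ} (hb : b ≤ L.length - 1) :
    seg c L.dropLast a b = seg c L a b := by
  unfold seg
  congr 1
  apply Finset.filter_congr
  intro m hm
  simp only [Finset.mem_Ico] at hm
  rw [getD_dropLast L (by omega)]

lemma seg_mono (c : Bool) (L : List Bool) {a b a' b' : ℕ} (h1 : a' ≤ a) (h2 : b ≤ b') :
    seg c L a b ≤ seg c L a' b' :=
  Finset.card_le_card (Finset.filter_subset_filter _ (Finset.Ico_subset_Ico h1 h2))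

lemma seg_split (c : Bool) (L : List Bool) {a b : ℕ} (m : ℕ) (h1 : a ≤ m) (h2 : m ≤ b) :
    seg c L a b = seg c L a m + seg c L m b := by
  unfold seg
  rw [← Finset.card_union_of_disjoint (Finset.disjoint_filter_filter
    (Finset.Ico_disjoint_Ico_consecutive a m b)), ← Finset.filter_union,
    Finset.Ico_union_Ico_eq_Ico h1 h2]

lemma seg_single (c : Bool) (L : List Bool) {m : ℕ} (h : L.getD m true = c) :
    seg c L m (m + 1) = 1 := by
  unfold seg
  rw [Finset.Ico_add_one_right_eq_Icc, Finset.Icc_self, Finset.filter_singleton, if_pos h,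
    Finset.card_singleton]

def pairs (L : List Bool) : Finset (ℕ × ℕ) :=
  (Finset.range L.length ×ˢ Finset.range L.length).filter
    (fun p => p.1 ≠ p.2 ∧ L.getD p.1 true = true ∧ L.getD p.2 true = true)

lemma mem_pairs {L : List Bool} {p : ℕ × ℕ} :
    p ∈ pairs L ↔ p.1 < L.length ∧ p.2 < L.length ∧ p.1 ≠ p.2 ∧
      L.getD p.1 true = true ∧ L.getD p.2 true = true := by
  simp only [pairs, Finset.mem_filter, Finset.mem_product, Finset.mem_range]
  tauto

lemma Pset_eq (L : List Bool) (j : ℕ) :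
    Pset L j = (pairs L).filter (fun p => j ≤ arcBlack L p.1 p.2) := by
  unfold Pset pairs
  rw [Finset.filter_filter]
  apply Finset.filter_congr
  intro p _
  tauto

lemma mu_eq (J : ℕ) (L : List Bool) :
    mu J L = ∑ p ∈ pairs L, min (arcBlack L p.1 p.2) J := by
  unfold mu
  have h1 : ∀ j, (Pset L j).card = ∑ p ∈ pairs L, if j ≤ arcBlack L p.1 p.2 then 1 else 0 := by
    intro j
    rw [Pset_eq, Finset.card_filter]
  simp only [h1]
  rw [Finset.sum_comm]
  apply Finset.sum_congr rfl
  intro p _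
  rw [← Finset.card_filter]
  have : (Finset.Icc 1 J).filter (fun j => j ≤ arcBlack L p.1 p.2)
      = Finset.Icc 1 (min (arcBlack L p.1 p.2) J) := by
    ext x
    simp only [Finset.mem_filter, Finset.mem_Icc]
    omega
  rw [this, Nat.card_Icc]
  omega


lemma getD_rotate (L : List Bool) (r : ℕ) {m : ℕ} (hm : m < L.length) :
    (L.rotate r).getD m true = L.getD ((m + r) % L.length) true := by
  have hn : 0 < L.length := by omega
  rw [List.getD_eq_getElem _ _ (by rwa [List.length_rotate]),
    List.getD_eq_getElem _ _ (Nat.mod_lt _ hn)]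
  exact List.getElem_rotate L r m _

lemma mod_inj {n x y : ℕ} (hx : x < n) (hy : y < n) (r : ℕ)
    (h : (x + r) % n = (y + r) % n) : x = y := by
  have h2 : x ≡ y [MOD n] := Nat.ModEq.add_right_cancel' r h
  rwa [Nat.ModEq, Nat.mod_eq_of_lt hx, Nat.mod_eq_of_lt hy] at h2

lemma dist_shift (L : List Bool) (r : ℕ) {i j : ℕ} (hi : i < L.length) (hj : j < L.length) :
    dist L ((i + r) % L.length) ((j + r) % L.length) = dist L i j := by
  set n := L.length with hn
  have hn0 : 0 < n := by omega
  set A := (j + r) % n with hA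
  set B := (i + r) % n with hB
  have hAn : A < n := Nat.mod_lt _ hn0
  have hBn : B < n := Nat.mod_lt _ hn0
  have key : (A + n - B) ≡ (j + n - i) [MOD n] := by
    apply Nat.ModEq.add_right_cancel' (B + i)
    have e1 : A + n - B + (B + i) = A + n + i := by omega
    have e2 : j + n - i + (B + i) = j + n + B := by omega
    rw [e1, e2]
    calc A + n + i ≡ (j + r) + n + i [MOD n] := by
          exact Nat.ModEq.add_right _ (Nat.ModEq.add_right _ (Nat.mod_modEq _ _))
      _ = (j + n + (i + r)) := by ring
      _ ≡ j + n + B [MOD n] := Nat.ModEq.add_left _ ((Nat.mod_modEq _ _).symm)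
  exact key

lemma arcC_rotate (c : Bool) (L : List Bool) (r : ℕ) {i j : ℕ}
    (hi : i < L.length) (hj : j < L.length) :
    arcC c (L.rotate r) i j = arcC c L ((i + r) % L.length) ((j + r) % L.length) := by
  have hn0 : 0 < L.length := by omega
  have hlen : (L.rotate r).length = L.length := List.length_rotate L r
  have hdist : dist (L.rotate r) i j = dist L i j := by
    unfold Necklace.dist; rw [hlen]
  unfold arcC
  rw [hdist, hlen, dist_shift L r hi hj]
  apply List.countP_congr
  intro k _
  simp only [decide_eq_true_eq]
  have hgoal : (L.rotate r).getD ((i + k) % L.length) true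
      = L.getD (((i + r) % L.length + k) % L.length) true := by
    rw [getD_rotate L r (Nat.mod_lt _ hn0), Nat.mod_add_mod, Nat.mod_add_mod,
      show i + k + r = i + r + k by ring]
  rw [hgoal]

lemma Pset_rotate (L : List Bool) (r : ℕ) (j : ℕ) (hn0 : 0 < L.length) :
    (Pset (L.rotate r) j).card = (Pset L j).card := by
  set n := L.length with hn
  have hmem : ∀ p : ℕ × ℕ, p ∈ Pset (L.rotate r) j ↔
      p.1 < n ∧ p.2 < n ∧ p.1 ≠ p.2 ∧ (L.rotate r).getD p.1 true = true ∧
      (L.rotate r).getD p.2 true = true ∧ j ≤ arcBlack (L.rotate r) p.1 p.2 := by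
    intro p
    simp only [Pset, Finset.mem_filter, Finset.mem_product, Finset.mem_range,
      List.length_rotate]
    tauto
  have hmemL : ∀ p : ℕ × ℕ, p ∈ Pset L j ↔
      p.1 < n ∧ p.2 < n ∧ p.1 ≠ p.2 ∧ L.getD p.1 true = true ∧
      L.getD p.2 true = true ∧ j ≤ arcBlack L p.1 p.2 := by
    intro p
    simp only [Pset, Finset.mem_filter, Finset.mem_product, Finset.mem_range]
    tauto
  have harcB : ∀ {a b : ℕ}, a < n → b < n →
      arcBlack (L.rotate r) a b = arcBlack L ((a + r) % n) ((b + r) % n) := by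
    intro a b ha hb
    exact arcC_rotate false L r ha hb
  apply Finset.card_bij (fun p _ => (((p.1 + r) % n, (p.2 + r) % n) : ℕ × ℕ))
  · intro p hp
    rw [hmem] at hp
    obtain ⟨h1, h2, h3, h4, h5, h6⟩ := hp
    rw [hmemL]
    refine ⟨Nat.mod_lt _ hn0, Nat.mod_lt _ hn0, ?_, ?_, ?_, ?_⟩
    · intro heq
      exact h3 (mod_inj h1 h2 r heq)
    · rwa [getD_rotate L r h1] at h4
    · rwa [getD_rotate L r h2] at h5
    · rwa [harcB h1 h2] at h6
  · intro p hp q hq heq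
    rw [hmem] at hp hq
    simp only [Prod.mk.injEq] at heq
    obtain ⟨p1, p2⟩ := p
    obtain ⟨q1, q2⟩ := q
    simp only [Prod.mk.injEq] at heq ⊢
    exact ⟨mod_inj hp.1 hq.1 r heq.1, mod_inj hp.2.1 hq.2.1 r heq.2⟩
  · intro q hq
    rw [hmemL] at hq
    obtain ⟨h1, h2, h3, h4, h5, h6⟩ := hq
    have hrdiv : r % n + n * (r / n) = r := Nat.mod_add_div r n
    have hrn : r % n < n := Nat.mod_lt _ hn0
    set t := n - r % n with ht
    have key : ∀ x : ℕ, x < n → ((x + t) % n + r) % n = x := by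
      intro x hx
      have hmul : (1 + r / n) * n = n + n * (r / n) := by ring
      rw [Nat.mod_add_mod, show x + t + r = x + (1 + r / n) * n by omega,
        Nat.add_mul_mod_self_right, Nat.mod_eq_of_lt hx]
    refine ⟨((q.1 + t) % n, (q.2 + t) % n), ?_, ?_⟩
    · rw [hmem]
      refine ⟨Nat.mod_lt _ hn0, Nat.mod_lt _ hn0, ?_, ?_, ?_, ?_⟩
      · intro heq
        apply h3
        have := congrArg (fun x => (x + r) % n) heq
        simp only at this
        rwa [key _ h1, key _ h2] at this
      · rw [getD_rotate L r (Nat.mod_lt _ hn0), key _ h1]; exact h4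
      · rw [getD_rotate L r (Nat.mod_lt _ hn0), key _ h2]; exact h5
      · rw [harcB (Nat.mod_lt _ hn0) (Nat.mod_lt _ hn0), key _ h1, key _ h2]; exact h6
    · exact Prod.ext (key _ h1) (key _ h2)

lemma mu_rotate (J : ℕ) (L : List Bool) (r : ℕ) (hn0 : 0 < L.length) :
    mu J (L.rotate r) = mu J L := by
  unfold mu
  exact Finset.sum_congr rfl fun j _ => Pset_rotate L r j hn0

lemma dropLast_rotate_succ (L : List Bool) {v : ℕ} (hv : v < L.length) :
    (L.rotate (v + 1)).dropLast = (L.eraseIdx v).rotate v := by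
  have h1 : L.rotate (v + 1) = L.drop (v + 1) ++ L.take (v + 1) :=
    List.rotate_eq_drop_append_take (by omega)
  have hlen : (L.eraseIdx v).length = L.length - 1 := by
    rw [List.eraseIdx_eq_take_drop_succ]
    simp only [List.length_append, List.length_take, List.length_drop]
    omega
  have h2 : (L.eraseIdx v).rotate v = (L.eraseIdx v).drop v ++ (L.eraseIdx v).take v :=
    List.rotate_eq_drop_append_take (by omega)
  have htv : (L.take v).length = v := by rw [List.length_take]; omega
  have hd : (L.take v ++ L.drop (v + 1)).drop v = L.drop (v + 1) := by
    rw [List.drop_append, htv, Nat.sub_self, List.drop_zero,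
      List.drop_eq_nil_of_le (by omega), List.nil_append]
  have htk : (L.take v ++ L.drop (v + 1)).take v = L.take v := by
    rw [List.take_append, htv, Nat.sub_self, List.take_zero,
      List.append_nil, List.take_take]
    simp
  rw [h1, h2, List.eraseIdx_eq_take_drop_succ, hd, htk,
    List.dropLast_append_of_ne_nil (List.ne_nil_of_length_pos (by rw [List.length_take]; omega)),
    List.dropLast_eq_take, List.length_take, List.take_take]
  congr 1
  rw [show ((v + 1) ⊓ L.length - 1) ⊓ (v + 1) = v by
    rw [Nat.min_eq_left (by omega)]
    omega]


-- (B): comparison of arcBlack between L and L.dropLast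
lemma arc_dropLast_lt (c : Bool) (L : List Bool) {i j : ℕ} (hij : i < j)
    (hj : j < L.length - 1) : arcC c L.dropLast i j = arcC c L i j := by
  rw [A1 c L.dropLast hij (by rw [List.length_dropLast]; omega),
    A1 c L hij (by omega), seg_dropLast c L (by omega)]

lemma arc_dropLast_gt (c : Bool) (L : List Bool) {i j : ℕ} (hji : j < i)
    (hi : i < L.length - 1) (hc : L.getD (L.length - 1) true = c) :
    arcC c L.dropLast i j + 1 = arcC c L i j := by
  have hn : 2 ≤ L.length := by omega
  rw [A2 c L.dropLast hji (by rw [List.length_dropLast]; omega),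
    A2 c L hji (by omega), List.length_dropLast,
    seg_dropLast c L (le_refl _), seg_dropLast c L (by omega)]
  have hsp : seg c L (i + 1) L.length
      = seg c L (i + 1) (L.length - 1) + seg c L (L.length - 1) L.length :=
    seg_split c L (L.length - 1) (by omega) (by omega)
  have hone : seg c L (L.length - 1) L.length = 1 := by
    have := seg_single c L hc
    rwa [show L.length - 1 + 1 = L.length by omega] at this
  omega

/-- Core: the special case where the removed black bead is the last one. -/
theorem core (L : List Bool) (J : ℕ) (v1 v3 : ℕ)
    (hv1 : v1 < L.length - 1) (hv3 : v3 < L.length - 1)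
    (hb2 : L.getD (L.length - 1) true = false)
    (h31 : v3 < v1)
    (harc : arcBlack L v1 v3 ≤ J) :
    mu J L.dropLast + arcWhite L v1 (L.length - 1) * arcWhite L (L.length - 1) v3 ≤ mu J L := by
  set n := L.length with hn
  have hn2 : 2 ≤ n := by omega
  -- the white-count forms
  have hm1 : arcWhite L v1 (n - 1) = seg true L (v1 + 1) (n - 1) := by
    rw [arcWhite_eq, A1 true L (by omega) (by omega)]
  have hm2 : arcWhite L (n - 1) v3 = seg true L 0 v3 := by
    rw [arcWhite_eq, A2 true L (by omega) (by omega),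
      show n - 1 + 1 = n by omega]
    simp [seg]
    intro x h1 h2; omega
  -- the special pair set
  set S : Finset (ℕ × ℕ) :=
    ((Finset.Ico (v1 + 1) (n - 1)).filter (fun m => L.getD m true = true)) ×ˢ
      ((Finset.Ico 0 v3).filter (fun m => L.getD m true = true)) with hS
  have hmemS : ∀ p : ℕ × ℕ, p ∈ S ↔
      ((v1 + 1 ≤ p.1 ∧ p.1 < n - 1) ∧ L.getD p.1 true = true) ∧
      (p.2 < v3 ∧ L.getD p.2 true = true) := by
    intro p
    simp [hS, Finset.mem_product, Finset.mem_filter, Finset.mem_Ico, and_assoc]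
  have hcardS : S.card = arcWhite L v1 (n - 1) * arcWhite L (n - 1) v3 := by
    rw [hm1, hm2, hS, Finset.card_product]; rfl
  have hSsub : S ⊆ pairs L.dropLast := by
    intro p hp
    rw [hmemS] at hp
    rw [mem_pairs, List.length_dropLast]
    obtain ⟨⟨⟨h1, h2⟩, h3⟩, h4, h5⟩ := hp
    exact ⟨by omega, by omega, by omega,
      by rwa [getD_dropLast L (by omega)], by rwa [getD_dropLast L (by omega)]⟩
  have hsub : pairs L.dropLast ⊆ pairs L := by
    intro p hp
    rw [mem_pairs, List.length_dropLast] at hp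
    rw [mem_pairs]
    obtain ⟨h1, h2, h3, h4, h5⟩ := hp
    exact ⟨by omega, by omega, h3,
      by rwa [getD_dropLast L h1] at h4, by rwa [getD_dropLast L h2] at h5⟩
  -- arcBlack L v1 v3 decomposition for monotonicity
  have hbv : arcBlack L v1 v3 = seg false L (v1 + 1) n + seg false L 0 v3 := by
    rw [arcBlack_eq, A2 false L h31 (by omega)]
  calc mu J L.dropLast + arcWhite L v1 (n - 1) * arcWhite L (n - 1) v3
      = (∑ p ∈ pairs L.dropLast, min (arcBlack L.dropLast p.1 p.2) J) + S.card := by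
        rw [mu_eq, hcardS]
    _ = ∑ p ∈ pairs L.dropLast,
          (min (arcBlack L.dropLast p.1 p.2) J + if p ∈ S then 1 else 0) := by
        rw [Finset.sum_add_distrib, Finset.sum_ite_mem,
          Finset.inter_eq_right.mpr hSsub, Finset.card_eq_sum_ones]
    _ ≤ ∑ p ∈ pairs L.dropLast, min (arcBlack L p.1 p.2) J := by
        apply Finset.sum_le_sum
        intro p hp
        rw [mem_pairs, List.length_dropLast] at hp
        obtain ⟨h1, h2, h3, _, _⟩ := hp
        by_cases hps : p ∈ S
        · rw [if_pos hps]
          rw [hmemS] at hps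
          obtain ⟨⟨⟨g1, g2⟩, _⟩, g3, _⟩ := hps
          have h21 : p.2 < p.1 := by omega
          have hd : arcBlack L.dropLast p.1 p.2 + 1 = arcBlack L p.1 p.2 := by
            rw [arcBlack_eq, arcBlack_eq]
            exact arc_dropLast_gt false L h21 (by omega) hb2
          have hmon : arcBlack L p.1 p.2 ≤ J := by
            refine le_trans (le_trans ?_ (le_of_eq hbv.symm)) harc
            rw [arcBlack_eq, A2 false L h21 (by omega)]
            exact Nat.add_le_add (seg_mono false L (by omega) (le_refl _))
              (seg_mono false L (le_refl _) (by omega))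
          omega
        · rw [if_neg hps]
          rcases Nat.lt_or_ge p.1 p.2 with h | h
          · rw [arcBlack_eq, arcBlack_eq, arc_dropLast_lt false L h h2]
            omega
          · have h21 : p.2 < p.1 := by omega
            have hd : arcBlack L.dropLast p.1 p.2 + 1 = arcBlack L p.1 p.2 := by
              rw [arcBlack_eq, arcBlack_eq]
              exact arc_dropLast_gt false L h21 (by omega) hb2
            omega
    _ ≤ ∑ p ∈ pairs L, min (arcBlack L p.1 p.2) J := Finset.sum_le_sum_of_subset hsub
    _ = mu J L := (mu_eq J L).symm


end NecklaceAux

/-- If `v₁, v₂, v₃` are black beads such that the clockwise arc from `v₁` to `v₃`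
contains `v₂` and has at most `J` black beads (excluding `v₁` and `v₃`), and the arcs
`v₁–v₂` and `v₂–v₃` contain `m₁` and `m₂` white beads respectively, then removing `v₂`
decreases the `J`-mixture at least by `m₁ m₂`. -/
theorem necklace_mixture_remove_black_bead (L : List Bool) (J : ℕ) (hJ : 1 ≤ J)
    (v1 v2 v3 : ℕ) (hv1 : v1 < L.length) (hv2 : v2 < L.length) (hv3 : v3 < L.length)
    (hb1 : L.getD v1 true = false) (hb2 : L.getD v2 true = false)
    (hb3 : L.getD v3 true = false)
    (h12 : v1 ≠ v2) (h23 : v2 ≠ v3) (h13 : v1 ≠ v3)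
    (hbetween : Necklace.dist L v1 v2 < Necklace.dist L v1 v3)
    (harc : Necklace.arcBlack L v1 v3 ≤ J) :
    Necklace.mu J (L.eraseIdx v2) + Necklace.arcWhite L v1 v2 * Necklace.arcWhite L v2 v3 ≤
      Necklace.mu J L := by
  classical
  have hn0 : 0 < L.length := by omega
  have hn2 : 2 ≤ L.length := by omega
  set n := L.length with hn
  set r := v2 + 1 with hr
  set t := n - r with ht
  have key : ∀ v, v < n → ((v + t) % n + r) % n = v := by
    intro v hv
    rw [Nat.mod_add_mod, show v + t + r = v + n by omega, Nat.add_mod_right,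
      Nat.mod_eq_of_lt hv]
  set w1 := (v1 + t) % n with hw1
  set w3 := (v3 + t) % n with hw3
  have hw1n : w1 < n := Nat.mod_lt _ hn0
  have hw3n : w3 < n := Nat.mod_lt _ hn0
  have hkey1 : (w1 + r) % n = v1 := key v1 hv1
  have hkey3 : (w3 + r) % n = v3 := key v3 hv3
  have hw2 : (v2 + t) % n = n - 1 := by
    rw [show v2 + t = n - 1 by omega, Nat.mod_eq_of_lt (by omega)]
  have hkey2 : (n - 1 + r) % n = v2 := by
    have := key v2 hv2
    rwa [hw2] at this
  have hn1n : n - 1 < n := by omega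
  -- transfer of bead colours
  have hMb2 : (L.rotate r).getD (n - 1) true = false := by
    rw [NecklaceAux.getD_rotate L r hn1n, hkey2]
    exact hb2
  -- w1, w3 are distinct from n-1 and from each other
  have hw1ne : w1 ≠ n - 1 := by
    intro h
    apply h12
    rw [← hkey1, h, hkey2]
  have hw3ne : w3 ≠ n - 1 := by
    intro h
    apply h23
    rw [← hkey3, h, hkey2]
  have hw13 : w1 ≠ w3 := by
    intro h
    apply h13
    rw [← hkey1, h, hkey3]
  have hw1lt : w1 < n - 1 := by omega
  have hw3lt : w3 < n - 1 := by omega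
  -- transfer of the betweenness hypothesis
  have hd12 : Necklace.dist L w1 (n - 1) = Necklace.dist L v1 v2 := by
    rw [← hkey1, ← hkey2]
    exact (NecklaceAux.dist_shift L r hw1n hn1n).symm
  have hd13 : Necklace.dist L w1 w3 = Necklace.dist L v1 v3 := by
    rw [← hkey1, ← hkey3]
    exact (NecklaceAux.dist_shift L r hw1n hw3n).symm
  have hbetween' : Necklace.dist L w1 (n - 1) < Necklace.dist L w1 w3 := by
    rw [hd12, hd13]; exact hbetween
  have h31 : w3 < w1 := by
    rcases Nat.lt_or_ge w3 w1 with h | h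
    · exact h
    · exfalso
      have h1 : Necklace.dist L w1 (n - 1) = n - 1 - w1 :=
        NecklaceAux.dist_eval_le L (by omega) hn1n
      have h2 : Necklace.dist L w1 w3 = w3 - w1 :=
        NecklaceAux.dist_eval_le L (by omega) (by omega)
      omega
  -- transfer of the arc-count hypotheses
  have harcM : Necklace.arcBlack (L.rotate r) w1 w3 = Necklace.arcBlack L v1 v3 := by
    rw [NecklaceAux.arcBlack_eq, NecklaceAux.arcBlack_eq,
      NecklaceAux.arcC_rotate false L r hw1n hw3n, hkey1, hkey3]
  have hMlen : (L.rotate r).length = n := List.length_rotate L r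
  have hcore := NecklaceAux.core (L.rotate r) J w1 w3 (by rw [hMlen]; exact hw1lt)
    (by rw [hMlen]; exact hw3lt) (by rw [hMlen]; exact hMb2) h31
    (by rw [harcM]; exact harc)
  rw [hMlen] at hcore
  -- translate the conclusion
  have e1 : Necklace.mu J (L.rotate r) = Necklace.mu J L := NecklaceAux.mu_rotate J L r hn0
  have he : (L.eraseIdx v2).length = n - 1 := by
    rw [List.eraseIdx_eq_take_drop_succ]
    simp only [List.length_append, List.length_take, List.length_drop]
    omega
  have e2 : Necklace.mu J (L.rotate r).dropLast = Necklace.mu J (L.eraseIdx v2) := by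
    rw [NecklaceAux.dropLast_rotate_succ L hv2]
    exact NecklaceAux.mu_rotate J (L.eraseIdx v2) v2 (by omega)
  have e3 : Necklace.arcWhite (L.rotate r) w1 (n - 1) = Necklace.arcWhite L v1 v2 := by
    rw [NecklaceAux.arcWhite_eq, NecklaceAux.arcWhite_eq,
      NecklaceAux.arcC_rotate true L r hw1n hn1n, hkey1, hkey2]
  have e4 : Necklace.arcWhite (L.rotate r) (n - 1) w3 = Necklace.arcWhite L v2 v3 := by
    rw [NecklaceAux.arcWhite_eq, NecklaceAux.arcWhite_eq,
      NecklaceAux.arcC_rotate true L r hn1n hw3n, hkey2, hkey3]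
  rw [e1, e2, e3, e4] at hcore
  exact hcore
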